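/- arXiv:2305.06548 — 3 statements merged into one kernel-verified Lean document; each statement's English description precedes it below -/
import Mathlib

section
/- In the 2-layered dual-context modal type theory, every term well-typed at layer 0 is also well-typed at layer 1 in the same global and local contexts. -/
/-- Simple types: natural numbers, box modality, functions. -/
inductive Ty : Type
  | nat : Ty
  | box : Ty → Ty
  | arr : Ty → Ty → Ty

/-- Core types: built only from `nat` and arrows (no box). -/
inductive Core : Ty → Prop
  | nat : Core .nat
  | arr : ∀ {S T}, Core S → Core T → Core (.arr S T)

/-- Layer-1 types: boxes may occur, but only over core types. -/
inductive Type1 : Ty → Prop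
  | nat : Type1 .nat
  | arr : ∀ {S T}, Type1 S → Type1 T → Type1 (.arr S T)
  | box : ∀ {T}, Core T → Type1 (.box T)

/-- A context all of whose types are core. -/
def CoreCtx (Γ : List Ty) : Prop := ∀ T ∈ Γ, Core T

/-- A context all of whose types are layer-1 types. -/
def Type1Ctx (Γ : List Ty) : Prop := ∀ T ∈ Γ, Type1 T

/-- Terms (de Bruijn indices, separate local variables `var` and global variables `gvar`). -/
inductive Tm : Type
  | var : ℕ → Tm
  | gvar : ℕ → Tm
  | zero : Tm
  | succ : Tm → Tm
  | box : Tm → Tm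
  | letbox : Tm → Tm → Tm
  | lam : Tm → Tm
  | app : Tm → Tm → Tm

/-- Layered typing judgment `Ψ; Γ ⊢ᵢ t : T` of the 2-layered dual-context modal type theory.
`Ψ` is the global context, `Γ` the local context, `i ∈ {0,1}` the layer. -/
inductive Typing : List Ty → List Ty → Fin 2 → Tm → Ty → Prop
  | var0 : ∀ {Ψ Γ x T}, CoreCtx Ψ → CoreCtx Γ → Γ[x]? = some T → Typing Ψ Γ 0 (.var x) T
  | var1 : ∀ {Ψ Γ x T}, CoreCtx Ψ → Type1Ctx Γ → Γ[x]? = some T → Typing Ψ Γ 1 (.var x) T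
  | gvar0 : ∀ {Ψ Γ u T}, CoreCtx Ψ → CoreCtx Γ → Ψ[u]? = some T → Typing Ψ Γ 0 (.gvar u) T
  | gvar1 : ∀ {Ψ Γ u T}, CoreCtx Ψ → Type1Ctx Γ → Ψ[u]? = some T → Typing Ψ Γ 1 (.gvar u) T
  | zero0 : ∀ {Ψ Γ}, CoreCtx Ψ → CoreCtx Γ → Typing Ψ Γ 0 .zero .nat
  | zero1 : ∀ {Ψ Γ}, CoreCtx Ψ → Type1Ctx Γ → Typing Ψ Γ 1 .zero .nat
  | succ : ∀ {Ψ Γ i t}, Typing Ψ Γ i t .nat → Typing Ψ Γ i (.succ t) .nat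
  | lam : ∀ {Ψ Γ i t S T}, Typing Ψ (S :: Γ) i t T → Typing Ψ Γ i (.lam t) (.arr S T)
  | app : ∀ {Ψ Γ i t s S T},
      Typing Ψ Γ i t (.arr S T) → Typing Ψ Γ i s S → Typing Ψ Γ i (.app t s) T
  | box : ∀ {Ψ Γ t T}, Type1Ctx Γ → Typing Ψ [] 0 t T → Typing Ψ Γ 1 (.box t) (.box T)
  | letbox : ∀ {Ψ Γ s t T T'},
      Typing Ψ Γ 1 s (.box T) → Typing (T :: Ψ) Γ 1 t T' →
      Typing Ψ Γ 1 (.letbox s t) T'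

theorem Core.type1 {T : Ty} (h : Core T) : Type1 T := by
  induction h with
  | nat => exact .nat
  | arr _ _ ih1 ih2 => exact .arr ih1 ih2

theorem CoreCtx.type1Ctx {Γ : List Ty} (h : CoreCtx Γ) : Type1Ctx Γ :=
  fun T hT => (h T hT).type1

theorem lifting_aux : ∀ {Ψ Γ : List Ty} {i : Fin 2} {t : Tm} {T : Ty},
    Typing Ψ Γ i t T → i = 0 → Typing Ψ Γ 1 t T := by
  intro Ψ Γ i t T h
  induction h with
  | var0 h1 h2 h3 => exact fun _ => .var1 h1 h2.type1Ctx h3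
  | var1 => exact fun h => by simp at h
  | gvar0 h1 h2 h3 => exact fun _ => .gvar1 h1 h2.type1Ctx h3
  | gvar1 => exact fun h => by simp at h
  | zero0 h1 h2 => exact fun _ => .zero1 h1 h2.type1Ctx
  | zero1 => exact fun h => by simp at h
  | succ _ ih => exact fun h => .succ (ih h)
  | lam _ ih => exact fun h => .lam (ih h)
  | app _ _ ih1 ih2 => exact fun h => .app (ih1 h) (ih2 h)
  | box => exact fun h => by simp at h
  | letbox => exact fun h => by simp at h

/-- Lifting: every term well-typed at layer 0 is also well-typed at layer 1
in the same global and local contexts. -/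
theorem lifting : ∀ {Ψ Γ : List Ty} {t : Tm} {T : Ty},
    Typing Ψ Γ 0 t T → Typing Ψ Γ 1 t T := fun h => lifting_aux h rfl
end

section
/- In the 2-layered dual-context modal type theory, the equivalence relation at layer 0 is syntactic equality: if Ψ; Γ ⊢₀ t ≈ s : T then t = s. -/
/-- Lift a renaming under a binder. -/
def liftR (f : ℕ → ℕ) : ℕ → ℕ
  | 0 => 0
  | n + 1 => f n + 1

/-- Simultaneous renaming of global variables (by `g`) and local variables (by `l`).
Local renaming is reset under `box` (boxed terms are locally closed); the global
renaming is lifted under the `letbox` binder and the local renaming under `lam`. -/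
def rename (g l : ℕ → ℕ) : Tm → Tm
  | .var x => .var (l x)
  | .gvar u => .gvar (g u)
  | .zero => .zero
  | .succ t => .succ (rename g l t)
  | .box t => .box (rename g id t)
  | .letbox s t => .letbox (rename g l s) (rename (liftR g) l t)
  | .lam t => .lam (rename g (liftR l) t)
  | .app t s => .app (rename g l t) (rename g l s)

/-- Shift indices `≥ c` up by one. -/
def shiftFn (c x : ℕ) : ℕ := if x < c then x else x + 1

/-- Shift local variables `≥ c` of a term up by one. -/
def lshift (c : ℕ) (t : Tm) : Tm := rename id (shiftFn c) t

/-- Shift global variables `≥ c` of a term up by one. -/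
def gshift (c : ℕ) (t : Tm) : Tm := rename (shiftFn c) id t

/-- Single local substitution `t[s/x]`: replace local variable `n` by `s`.
It goes under `lam` (lifting) and under `letbox` bodies (shifting the global
variables of `s`), but not under `box`. -/
def lsubst (n : ℕ) (s : Tm) : Tm → Tm
  | .var x => if x = n then s else if n < x then .var (x - 1) else .var x
  | .gvar u => .gvar u
  | .zero => .zero
  | .succ t => .succ (lsubst n s t)
  | .box t => .box t
  | .letbox a b => .letbox (lsubst n s a) (lsubst n (gshift 0 s) b)
  | .lam t => .lam (lsubst (n + 1) (lshift 0 s) t)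
  | .app a b => .app (lsubst n s a) (lsubst n s b)

/-- Single global substitution `t[s/u]`: replace global variable `n` by `s`
everywhere, including under `box`. -/
def gsubst (n : ℕ) (s : Tm) : Tm → Tm
  | .var x => .var x
  | .gvar u => if u = n then s else if n < u then .gvar (u - 1) else .gvar u
  | .zero => .zero
  | .succ t => .succ (gsubst n s t)
  | .box t => .box (gsubst n s t)
  | .letbox a b => .letbox (gsubst n s a) (gsubst (n + 1) (gshift 0 s) b)
  | .lam t => .lam (gsubst n s t)
  | .app a b => .app (gsubst n s a) (gsubst n s b)

/-- Layered equivalence judgment `Ψ; Γ ⊢ᵢ t ≈ s : T`: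
PER rules (symmetry, transitivity) and congruence rules at both layers
(for `box`/`letbox` only at layer 1), and β/η rules at layer 1 only. -/
inductive TmEquiv : List Ty → List Ty → Fin 2 → Tm → Tm → Ty → Prop
  | symm : ∀ {Ψ Γ i t s T}, TmEquiv Ψ Γ i t s T → TmEquiv Ψ Γ i s t T
  | trans : ∀ {Ψ Γ i t s r T}, TmEquiv Ψ Γ i t s T → TmEquiv Ψ Γ i s r T → TmEquiv Ψ Γ i t r T
  | var0 : ∀ {Ψ Γ x T}, CoreCtx Ψ → CoreCtx Γ → Γ[x]? = some T →
      TmEquiv Ψ Γ 0 (.var x) (.var x) T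
  | var1 : ∀ {Ψ Γ x T}, CoreCtx Ψ → Type1Ctx Γ → Γ[x]? = some T →
      TmEquiv Ψ Γ 1 (.var x) (.var x) T
  | gvar0 : ∀ {Ψ Γ u T}, CoreCtx Ψ → CoreCtx Γ → Ψ[u]? = some T →
      TmEquiv Ψ Γ 0 (.gvar u) (.gvar u) T
  | gvar1 : ∀ {Ψ Γ u T}, CoreCtx Ψ → Type1Ctx Γ → Ψ[u]? = some T →
      TmEquiv Ψ Γ 1 (.gvar u) (.gvar u) T
  | zero0 : ∀ {Ψ Γ}, CoreCtx Ψ → CoreCtx Γ → TmEquiv Ψ Γ 0 .zero .zero .nat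
  | zero1 : ∀ {Ψ Γ}, CoreCtx Ψ → Type1Ctx Γ → TmEquiv Ψ Γ 1 .zero .zero .nat
  | succ : ∀ {Ψ Γ i t t'}, TmEquiv Ψ Γ i t t' .nat → TmEquiv Ψ Γ i (.succ t) (.succ t') .nat
  | lam : ∀ {Ψ Γ i t t' S T}, TmEquiv Ψ (S :: Γ) i t t' T →
      TmEquiv Ψ Γ i (.lam t) (.lam t') (.arr S T)
  | app : ∀ {Ψ Γ i t t' s s' S T}, TmEquiv Ψ Γ i t t' (.arr S T) → TmEquiv Ψ Γ i s s' S →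
      TmEquiv Ψ Γ i (.app t s) (.app t' s') T
  | box : ∀ {Ψ Γ t t' T}, Type1Ctx Γ → TmEquiv Ψ [] 0 t t' T →
      TmEquiv Ψ Γ 1 (.box t) (.box t') (.box T)
  | letbox : ∀ {Ψ Γ s s' t t' T T'}, TmEquiv Ψ Γ 1 s s' (.box T) →
      TmEquiv (T :: Ψ) Γ 1 t t' T' → TmEquiv Ψ Γ 1 (.letbox s t) (.letbox s' t') T'
  | beta_app : ∀ {Ψ Γ t s S T}, Typing Ψ (S :: Γ) 1 t T → Typing Ψ Γ 1 s S →
      TmEquiv Ψ Γ 1 (.app (.lam t) s) (lsubst 0 s t) T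
  | beta_box : ∀ {Ψ Γ s t T T'}, Typing Ψ [] 0 s T → Typing (T :: Ψ) Γ 1 t T' →
      TmEquiv Ψ Γ 1 (.letbox (.box s) t) (gsubst 0 s t) T'
  | eta : ∀ {Ψ Γ t S T}, Typing Ψ Γ 1 t (.arr S T) →
      TmEquiv Ψ Γ 1 t (.lam (.app (lshift 0 t) (.var 0))) (.arr S T)

theorem layer0_aux : ∀ {Ψ Γ : List Ty} {i : Fin 2} {t s : Tm} {T : Ty},
    TmEquiv Ψ Γ i t s T → i = 0 → t = s := by
  intro Ψ Γ i t s T h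
  induction h with
  | symm _ ih => intro hi; exact (ih hi).symm
  | trans _ _ ih1 ih2 => intro hi; rw [ih1 hi, ih2 hi]
  | succ _ ih => intro hi; rw [ih hi]
  | lam _ ih => intro hi; rw [ih hi]
  | app _ _ ih1 ih2 => intro hi; rw [ih1 hi, ih2 hi]
  | var0 | var1 | gvar0 | gvar1 | zero0 | zero1 => intro _; rfl
  | box | letbox | beta_app | beta_box | eta => intro hi; exact absurd hi (by decide)

/-- At layer 0 the equivalence relation is just syntactic equality:
if `Ψ; Γ ⊢₀ t ≈ s : T` then `t = s`. -/
theorem layer0_equiv_is_equality : ∀ {Ψ Γ : List Ty} {t s : Tm} {T : Ty},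
    TmEquiv Ψ Γ 0 t s T → t = s := fun h => layer0_aux h rfl
end

section
/- Simultaneous global substitutions for the dual-context modal type theory are well-typed under application: if Ψ'; Γ ⊢ᵢ t : T and σ is a well-typed global substitution from Ψ to Ψ' (i.e. Ψ ⊢ σ : Ψ', with each component closed and typed at layer 0), then Ψ; Γ ⊢ᵢ t[σ] : T. -/
/-- Lookup in a substitution (list of terms), with a default. -/
def lookupT (σ : List Tm) (u : ℕ) (dflt : Tm) : Tm :=
  match σ, u with
  | [], _ => dflt
  | t :: _, 0 => t
  | _ :: σ, u + 1 => lookupT σ u dflt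

/-- Typing of simultaneous global substitutions: `Ψ ⊢ σ : Φ`, each component
closed and typed at layer 0. -/
inductive GSubTy : List Ty → List Tm → List Ty → Prop
  | nil : ∀ {Ψ}, CoreCtx Ψ → GSubTy Ψ [] []
  | cons : ∀ {Ψ σ Φ t T}, GSubTy Ψ σ Φ → Typing Ψ [] 0 t T →
      GSubTy Ψ (t :: σ) (T :: Φ)

/-- Application of a simultaneous global substitution: `x[σ] = x`, `u[σ] = σ(u)`,
it commutes with `zero`, `succ`, `lam`, application and `box`, and under `letbox`
the substitution is extended with `u/u` (de Bruijn: `gvar 0` consed onto the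
globally shifted substitution). -/
def applyG (σ : List Tm) : Tm → Tm
  | .var x => .var x
  | .gvar u => lookupT σ u (.gvar u)
  | .zero => .zero
  | .succ t => .succ (applyG σ t)
  | .box t => .box (applyG σ t)
  | .letbox a b => .letbox (applyG σ a) (applyG (.gvar 0 :: σ.map (gshift 0)) b)
  | .lam t => .lam (applyG σ t)
  | .app a b => .app (applyG σ a) (applyG σ b)

section Aux

/-- Well-formedness of a local context at a layer. -/
def Wf (i : Fin 2) (Γ : List Ty) : Prop := if i = 0 then CoreCtx Γ else Type1Ctx Γ

lemma core_type1 : ∀ {T}, Core T → Type1 T := by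
  intro T h; induction h with
  | nat => exact Type1.nat
  | arr _ _ ih1 ih2 => exact Type1.arr ih1 ih2

lemma coreCtx_cons {S Γ} (hS : Core S) (h : CoreCtx Γ) : CoreCtx (S :: Γ) := by
  intro T hT; rcases List.mem_cons.1 hT with rfl | hT
  · exact hS
  · exact h T hT

lemma type1Ctx_cons {S Γ} (hS : Type1 S) (h : Type1Ctx Γ) : Type1Ctx (S :: Γ) := by
  intro T hT; rcases List.mem_cons.1 hT with rfl | hT
  · exact hS
  · exact h T hT

lemma coreCtx_tail {S Γ} (h : CoreCtx (S :: Γ)) : CoreCtx Γ :=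
  fun T hT => h T (List.mem_cons_of_mem _ hT)

lemma type1Ctx_tail {S Γ} (h : Type1Ctx (S :: Γ)) : Type1Ctx Γ :=
  fun T hT => h T (List.mem_cons_of_mem _ hT)

lemma fin2cases (i : Fin 2) : i = 0 ∨ i = 1 := by omega

lemma wf_zero {Γ} : Wf 0 Γ ↔ CoreCtx Γ := by simp [Wf]
lemma wf_one {Γ} : Wf 1 Γ ↔ Type1Ctx Γ := by simp [Wf]

lemma wf_tail {i S Γ} (h : Wf i (S :: Γ)) : Wf i Γ := by
  rcases fin2cases i with rfl | rfl
  · exact wf_zero.2 (coreCtx_tail (wf_zero.1 h))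
  · exact wf_one.2 (type1Ctx_tail (wf_one.1 h))

/-- Every typing derivation has a core global context. -/
lemma typing_coreG : ∀ {Ψ Γ i t T}, Typing Ψ Γ i t T → CoreCtx Ψ := by
  intro Ψ Γ i t T h
  induction h with
  | var0 h1 _ _ => exact h1
  | var1 h1 _ _ => exact h1
  | gvar0 h1 _ _ => exact h1
  | gvar1 h1 _ _ => exact h1
  | zero0 h1 _ => exact h1
  | zero1 h1 _ => exact h1
  | succ _ ih => exact ih
  | lam _ ih => exact ih
  | app _ _ ih1 _ => exact ih1
  | box _ _ ih => exact ih
  | letbox _ _ _ ih2 => exact coreCtx_tail ih2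

/-- Every typing derivation has a well-formed local context. -/
lemma typing_wf : ∀ {Ψ Γ i t T}, Typing Ψ Γ i t T → Wf i Γ := by
  intro Ψ Γ i t T h
  induction h with
  | var0 _ h2 _ => exact wf_zero.2 h2
  | var1 _ h2 _ => exact wf_one.2 h2
  | gvar0 _ h2 _ => exact wf_zero.2 h2
  | gvar1 _ h2 _ => exact wf_one.2 h2
  | zero0 _ h2 => exact wf_zero.2 h2
  | zero1 _ h2 => exact wf_one.2 h2
  | succ _ ih => exact ih
  | lam _ ih => exact wf_tail ih
  | app _ _ ih1 _ => exact ih1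
  | box h1 _ _ => exact wf_one.2 h1
  | letbox _ _ ih1 _ => exact ih1

lemma getElem?_append_left' {Γ Δ : List Ty} {x : ℕ} {T : Ty} (h : Γ[x]? = some T) :
    (Γ ++ Δ)[x]? = some T := by
  have hx : x < Γ.length := by
    by_contra hx
    rw [List.getElem?_eq_none (by omega)] at h
    cases h
  rw [List.getElem?_append_left hx]; exact h

/-- Weakening + layer lifting for layer-0 terms. -/
lemma weaken0 : ∀ {Ψ Γ j t T}, Typing Ψ Γ j t T → ∀ {Δ : List Ty} {i : Fin 2}, j = 0 →
    Wf i (Γ ++ Δ) → Typing Ψ (Γ ++ Δ) i t T := by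
  intro Ψ Γ j t T h
  induction h with
  | var0 h1 _ h3 =>
    intro Δ i _ hw
    rcases fin2cases i with rfl | rfl
    · exact Typing.var0 h1 (wf_zero.1 hw) (getElem?_append_left' h3)
    · exact Typing.var1 h1 (wf_one.1 hw) (getElem?_append_left' h3)
  | var1 _ _ _ => intro _ _ hj _; exact absurd hj (by decide)
  | gvar0 h1 _ h3 =>
    intro Δ i _ hw
    rcases fin2cases i with rfl | rfl
    · exact Typing.gvar0 h1 (wf_zero.1 hw) h3
    · exact Typing.gvar1 h1 (wf_one.1 hw) h3
  | gvar1 _ _ _ => intro _ _ hj _; exact absurd hj (by decide)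
  | zero0 h1 _ =>
    intro Δ i _ hw
    rcases fin2cases i with rfl | rfl
    · exact Typing.zero0 h1 (wf_zero.1 hw)
    · exact Typing.zero1 h1 (wf_one.1 hw)
  | zero1 _ _ => intro _ _ hj _; exact absurd hj (by decide)
  | succ _ ih => intro Δ i hj hw; exact Typing.succ (ih hj hw)
  | @lam Ψ' Γ' j' t' S' T' ht ih =>
    intro Δ i hj hw
    apply Typing.lam
    have hS : Core S' := by
      subst hj
      exact (wf_zero.1 (typing_wf ht)) S' List.mem_cons_self
    have hw' : Wf i (S' :: (Γ' ++ Δ)) := by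
      rcases fin2cases i with rfl | rfl
      · exact wf_zero.2 (coreCtx_cons hS (wf_zero.1 hw))
      · exact wf_one.2 (type1Ctx_cons (core_type1 hS) (wf_one.1 hw))
    exact ih hj hw'
  | app _ _ ih1 ih2 => intro Δ i hj hw; exact Typing.app (ih1 hj hw) (ih2 hj hw)
  | box _ _ _ => intro _ _ hj _; exact absurd hj (by decide)
  | letbox _ _ _ _ => intro _ _ hj _; exact absurd hj (by decide)

lemma liftR_id : liftR id = id := by
  funext n; cases n <;> rfl

/-- Global renaming preserves typing. -/
lemma grename : ∀ {Ψ' Γ i t T}, Typing Ψ' Γ i t T → ∀ {Ψ : List Ty} {ρ : ℕ → ℕ},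
    CoreCtx Ψ → (∀ u T', Ψ'[u]? = some T' → Ψ[ρ u]? = some T') →
    Typing Ψ Γ i (rename ρ id t) T := by
  intro Ψ' Γ i t T h
  induction h with
  | var0 _ h2 h3 => intro Ψ ρ hc hρ; exact Typing.var0 hc h2 h3
  | var1 _ h2 h3 => intro Ψ ρ hc hρ; exact Typing.var1 hc h2 h3
  | gvar0 _ h2 h3 => intro Ψ ρ hc hρ; exact Typing.gvar0 hc h2 (hρ _ _ h3)
  | gvar1 _ h2 h3 => intro Ψ ρ hc hρ; exact Typing.gvar1 hc h2 (hρ _ _ h3)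
  | zero0 _ h2 => intro Ψ ρ hc hρ; exact Typing.zero0 hc h2
  | zero1 _ h2 => intro Ψ ρ hc hρ; exact Typing.zero1 hc h2
  | succ _ ih => intro Ψ ρ hc hρ; exact Typing.succ (ih hc hρ)
  | lam _ ih =>
    intro Ψ ρ hc hρ
    apply Typing.lam
    rw [liftR_id]
    exact ih hc hρ
  | app _ _ ih1 ih2 => intro Ψ ρ hc hρ; exact Typing.app (ih1 hc hρ) (ih2 hc hρ)
  | box h1 _ ih => intro Ψ ρ hc hρ; exact Typing.box h1 (ih hc hρ)
  | @letbox Ψ2 Γ2 s2 t2 T2 T3 hs ht ih1 ih2 =>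
    intro Ψ ρ hc hρ
    apply Typing.letbox (ih1 hc hρ)
    have hT : Core T2 := typing_coreG ht T2 List.mem_cons_self
    apply ih2 (coreCtx_cons hT hc)
    intro u T' hu
    match u with
    | 0 =>
      simp only [List.getElem?_cons_zero, Option.some.injEq] at hu
      simp [liftR, hu]
    | u + 1 =>
      simp only [List.getElem?_cons_succ] at hu
      simp only [liftR, List.getElem?_cons_succ]
      exact hρ _ _ hu

lemma gsub_core : ∀ {Ψ σ Φ}, GSubTy Ψ σ Φ → CoreCtx Ψ := by
  intro Ψ σ Φ h
  induction h with
  | nil h => exact h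
  | cons _ _ ih => exact ih

lemma gsub_lookup : ∀ {Ψ σ Φ}, GSubTy Ψ σ Φ → ∀ {u : ℕ} {T : Ty} {d : Tm},
    Φ[u]? = some T → Typing Ψ [] 0 (lookupT σ u d) T := by
  intro Ψ σ Φ h
  induction h with
  | nil _ => intro u T d hu; simp at hu
  | cons _ ht ih =>
    intro u T d hu
    match u with
    | 0 => simp at hu; subst hu; exact ht
    | u + 1 => simp only [List.getElem?_cons_succ] at hu; exact ih hu

lemma gsub_shift : ∀ {Ψ σ Φ S}, GSubTy Ψ σ Φ → Core S →
    GSubTy (S :: Ψ) (σ.map (gshift 0)) Φ := by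
  intro Ψ σ Φ S h hS
  induction h with
  | nil h => exact GSubTy.nil (coreCtx_cons hS h)
  | cons hσ2 ht ih =>
    simp only [List.map_cons]
    apply GSubTy.cons ih
    apply grename ht (coreCtx_cons hS (gsub_core hσ2))
    intro u T' hu
    simp only [shiftFn, Nat.not_lt_zero, if_false, List.getElem?_cons_succ]
    exact hu

end Aux

/-- Simultaneous global substitutions are well-typed under application:
if `Ψ'; Γ ⊢ᵢ t : T` and `Ψ ⊢ σ : Ψ'` then `Ψ; Γ ⊢ᵢ t[σ] : T`. -/
theorem global_subst_application : ∀ {Ψ Ψ' Γ : List Ty} {i : Fin 2} {t : Tm} {T : Ty} {σ : List Tm},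
    Typing Ψ' Γ i t T → GSubTy Ψ σ Ψ' → Typing Ψ Γ i (applyG σ t) T := by
  intro Ψ Ψ' Γ i t T σ h hσ
  induction h generalizing Ψ σ with
  | var0 _ h2 h3 => exact Typing.var0 (gsub_core hσ) h2 h3
  | var1 _ h2 h3 => exact Typing.var1 (gsub_core hσ) h2 h3
  | gvar0 _ h2 h3 =>
    simp only [applyG]
    exact weaken0 (gsub_lookup hσ h3) rfl (wf_zero.2 h2)
  | gvar1 _ h2 h3 =>
    simp only [applyG]
    exact weaken0 (gsub_lookup hσ h3) rfl (wf_one.2 h2)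
  | zero0 _ h2 => exact Typing.zero0 (gsub_core hσ) h2
  | zero1 _ h2 => exact Typing.zero1 (gsub_core hσ) h2
  | succ _ ih => exact Typing.succ (ih hσ)
  | lam _ ih => exact Typing.lam (ih hσ)
  | app _ _ ih1 ih2 => exact Typing.app (ih1 hσ) (ih2 hσ)
  | box h1 _ ih => exact Typing.box h1 (ih hσ)
  | @letbox Ψ2 Γ2 s2 t2 T2 T3 hs ht ih1 ih2 =>
    apply Typing.letbox (ih1 hσ)
    apply ih2
    have hT : Core T2 := typing_coreG ht T2 List.mem_cons_self
    apply GSubTy.cons (gsub_shift hσ hT)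
    refine Typing.gvar0 (coreCtx_cons hT (gsub_core hσ)) ?_ (by simp)
    intro T hT2; simp at hT2
end
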